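/- Let N₁, N₂, W₁, W₂ be positive integers and let τ, ρ ∈ ℂ with Im τ > 0 and Im ρ > 0. Then the following are equivalent. (i) There exist integers α, β, γ, δ, α′, β′, γ′, δ′ with αδ − βγ = 1 and α′δ′ − β′γ′ = 1 such that (N₁W₂/(N₂W₁))·τ = (ατ + β)/(γτ + δ) and (W₁W₂/(N₁N₂))·ρ = (α′ρ + β′)/(γ′ρ + δ′). (ii) There exist integers x₀, y₀, x₀′, y₀′ satisfying (N₂W₁)²x₀² − 2N₁N₂W₁W₂(Re τ)x₀y₀ + (N₁W₂)²|τ|²y₀² = N₁N₂W₁W₂ and (N₁N₂)²x₀′² − 2N₁N₂W₁W₂(Re ρ)x₀′y₀′ + (W₁W₂)²|ρ|²y₀′² = N₁N₂W₁W₂, such that the four real numbers z₀ = −(N₁W₂/(N₂W₁))|τ|²y₀, w₀ = −2(Re τ)y₀ + (N₂W₁/(N₁W₂))x₀, z₀′ = −(W₁W₂/(N₁N₂))|ρ|²y₀′, w₀′ = −2(Re ρ)y₀′ + (N₁N₂/(W₁W₂))x₀′ are all integers. Moreover, in that case one may take α = x₀, β = z₀, γ = y₀, δ = w₀ and α′ =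 x₀′, β′ = z₀′, γ′ = y₀′, δ′ = w₀′. -/

import Mathlib

lemma tau_sq (τ : ℂ) : τ^2 - 2*(τ.re:ℂ)*τ + (‖τ‖^2 : ℝ) = 0 := by
  have h1 : ((‖τ‖^2 : ℝ) : ℂ) = τ * (starRingEnd ℂ) τ := by
    rw [Complex.mul_conj]; norm_cast; rw [Complex.sq_norm]
  have h2 : ((τ.re : ℂ)) = (τ + (starRingEnd ℂ) τ)/2 := by
    rw [Complex.add_conj]; push_cast; ring
  rw [h1, h2]; ring

lemma real_coeff_zero (τ : ℂ) (ht : τ.im ≠ 0) (c r : ℝ) (h : (c:ℂ) * τ = (r:ℂ)) :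
    c = 0 ∧ r = 0 := by
  have h1 := congrArg Complex.im h
  simp [Complex.mul_im] at h1
  have hc : c = 0 := by
    rcases h1 with h1 | h1
    · exact h1
    · exact absurd h1 ht
  refine ⟨hc, ?_⟩
  have h2 := congrArg Complex.re h
  simp [Complex.mul_re, hc] at h2
  exact h2.symm

lemma moreover_one (a b : ℝ) (ha : 0 < a) (hb : 0 < b) (τ : ℂ) (hτ : 0 < τ.im)
    (x y z w : ℤ)
    (hq : b^2 * x^2 - 2*(a*b)*τ.re*(x*y) + a^2*‖τ‖^2*y^2 = a*b)
    (hz : (z:ℝ) = -(a/b)*‖τ‖^2*y)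
    (hw : (w:ℝ) = -2*τ.re*y + (b/a)*x) :
    x*w - z*y = 1 ∧ ((a:ℂ)/(b:ℂ)) * τ = ((x:ℂ)*τ + z)/((y:ℂ)*τ + w) := by
  have ha' := ha.ne'
  have hb' := hb.ne'
  have hac : (a:ℂ) ≠ 0 := Complex.ofReal_ne_zero.mpr ha'
  have hbc : (b:ℂ) ≠ 0 := Complex.ofReal_ne_zero.mpr hb'
  have hdet : x*w - z*y = 1 := by
    have : ((x*w - z*y : ℤ) : ℝ) = 1 := by
      push_cast
      rw [hz, hw]
      field_simp
      linear_combination hq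
    exact_mod_cast this
  refine ⟨hdet, ?_⟩
  have hD : ((y:ℂ)*τ + w) ≠ 0 := by
    intro h
    have him := congrArg Complex.im h
    simp [Complex.add_im, Complex.mul_im] at him
    have hy : y = 0 := by
      rcases him with h1 | h1
      · exact_mod_cast h1
      · exact absurd h1 hτ.ne'
    have hre := congrArg Complex.re h
    simp [hy, Complex.add_re, Complex.mul_re] at hre
    have hw0 : w = 0 := by exact_mod_cast hre
    rw [hy, hw0] at hdet
    simp at hdet
  rw [eq_div_iff hD]
  have hzc := congrArg (Complex.ofReal) hz
  have hwc := congrArg (Complex.ofReal) hw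
  push_cast at hzc hwc
  rw [hzc, hwc]
  have hts := tau_sq τ
  push_cast at hts ⊢
  field_simp
  linear_combination ((a:ℂ)*(y:ℂ)) * hts

lemma forward_one (a b : ℝ) (ha : 0 < a) (hb : 0 < b) (τ : ℂ) (hτ : 0 < τ.im)
    (α β γ δ : ℤ) (hdet : α*δ - β*γ = 1)
    (heq : ((a:ℂ)/(b:ℂ)) * τ = ((α:ℂ)*τ + β)/((γ:ℂ)*τ + δ)) :
    (b^2*α^2 - 2*(a*b)*τ.re*(α*γ) + a^2*‖τ‖^2*γ^2 = a*b) ∧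
    ((β:ℝ) = -(a/b)*‖τ‖^2*γ) ∧
    ((δ:ℝ) = -2*τ.re*γ + (b/a)*α) := by
  have ha' := ha.ne'
  have hb' := hb.ne'
  have hD : ((γ:ℂ)*τ + δ) ≠ 0 := by
    intro h
    have him := congrArg Complex.im h
    simp [Complex.add_im, Complex.mul_im] at him
    have hy : γ = 0 := by
      rcases him with h1 | h1
      · exact_mod_cast h1
      · exact absurd h1 hτ.ne'
    have hre := congrArg Complex.re h
    simp [hy, Complex.add_re, Complex.mul_re] at hre
    have hw0 : δ = 0 := by exact_mod_cast hre
    rw [hy, hw0] at hdet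
    simp at hdet
  rw [eq_div_iff hD] at heq
  have hts := tau_sq τ
  have key : ((a/b*(2*γ*τ.re + δ) - α : ℝ) : ℂ) * τ
      = (((β:ℝ) + a/b*‖τ‖^2*γ : ℝ) : ℂ) := by
    push_cast
    push_cast at hts
    have hbc : (b:ℂ) ≠ 0 := Complex.ofReal_ne_zero.mpr hb'
    field_simp
    field_simp at heq
    linear_combination heq - (a*(γ:ℂ)) * hts
  obtain ⟨hc, hr⟩ := real_coeff_zero τ hτ.ne' _ _ key
  have hδ : (δ:ℝ) = -2*τ.re*γ + (b/a)*α := by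
    field_simp at hc
    field_simp
    linarith
  have hβ : (β:ℝ) = -(a/b)*‖τ‖^2*γ := by linarith
  refine ⟨?_, hβ, hδ⟩
  have hd : (α:ℝ)*δ - β*γ = 1 := by exact_mod_cast hdet
  rw [hβ, hδ] at hd
  field_simp at hd
  linear_combination hd

/-- Self-duality condition for duality defects of type `(m,i) = (0,0)` in the `c = 2`
compact boson CFT with moduli `(τ, ρ)`, under orbifolding by
`ℤ_{N₁} × ℤ_{N₂} × ℤ_{W₁} × ℤ_{W₂}`: the existence of the two `SL(2,ℤ)` elements is
equivalent to integer solvability of two quadratic equations with integrality side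
conditions; moreover the `SL(2,ℤ)` elements can be taken to be built from the solutions. -/
theorem duality_defects_zero_zero (N₁ N₂ W₁ W₂ : ℕ) (hN₁ : 0 < N₁) (hN₂ : 0 < N₂)
    (hW₁ : 0 < W₁) (hW₂ : 0 < W₂) (τ ρ : ℂ) (hτ : 0 < τ.im) (hρ : 0 < ρ.im) :
    ((∃ α β γ δ α' β' γ' δ' : ℤ,
        α * δ - β * γ = 1 ∧ α' * δ' - β' * γ' = 1 ∧
        ((N₁ * W₂ : ℂ) / (N₂ * W₁)) * τ = ((α : ℂ) * τ + β) / ((γ : ℂ) * τ + δ) ∧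
        ((W₁ * W₂ : ℂ) / (N₁ * N₂)) * ρ = ((α' : ℂ) * ρ + β') / ((γ' : ℂ) * ρ + δ')) ↔
      (∃ x₀ y₀ x₀' y₀' : ℤ,
        ((N₂ * W₁ : ℝ))^2 * x₀^2 - 2 * (N₁ * N₂ * W₁ * W₂ : ℝ) * τ.re * (x₀ * y₀)
            + ((N₁ * W₂ : ℝ))^2 * ‖τ‖^2 * y₀^2 = (N₁ * N₂ * W₁ * W₂ : ℝ) ∧
        ((N₁ * N₂ : ℝ))^2 * x₀'^2 - 2 * (N₁ * N₂ * W₁ * W₂ : ℝ) * ρ.re * (x₀' * y₀')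
            + ((W₁ * W₂ : ℝ))^2 * ‖ρ‖^2 * y₀'^2 = (N₁ * N₂ * W₁ * W₂ : ℝ) ∧
        (∃ z₀ : ℤ, (z₀ : ℝ) = -((N₁ * W₂ : ℝ) / (N₂ * W₁)) * ‖τ‖^2 * y₀) ∧
        (∃ w₀ : ℤ, (w₀ : ℝ) = -2 * τ.re * y₀ + ((N₂ * W₁ : ℝ) / (N₁ * W₂)) * x₀) ∧
        (∃ z₀' : ℤ, (z₀' : ℝ) = -((W₁ * W₂ : ℝ) / (N₁ * N₂)) * ‖ρ‖^2 * y₀') ∧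
        (∃ w₀' : ℤ, (w₀' : ℝ) = -2 * ρ.re * y₀' + ((N₁ * N₂ : ℝ) / (W₁ * W₂)) * x₀'))) ∧
    (∀ x₀ y₀ x₀' y₀' z₀ w₀ z₀' w₀' : ℤ,
        ((N₂ * W₁ : ℝ))^2 * x₀^2 - 2 * (N₁ * N₂ * W₁ * W₂ : ℝ) * τ.re * (x₀ * y₀)
            + ((N₁ * W₂ : ℝ))^2 * ‖τ‖^2 * y₀^2 = (N₁ * N₂ * W₁ * W₂ : ℝ) →
        ((N₁ * N₂ : ℝ))^2 * x₀'^2 - 2 * (N₁ * N₂ * W₁ * W₂ : ℝ) * ρ.re * (x₀' * y₀')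
            + ((W₁ * W₂ : ℝ))^2 * ‖ρ‖^2 * y₀'^2 = (N₁ * N₂ * W₁ * W₂ : ℝ) →
        (z₀ : ℝ) = -((N₁ * W₂ : ℝ) / (N₂ * W₁)) * ‖τ‖^2 * y₀ →
        (w₀ : ℝ) = -2 * τ.re * y₀ + ((N₂ * W₁ : ℝ) / (N₁ * W₂)) * x₀ →
        (z₀' : ℝ) = -((W₁ * W₂ : ℝ) / (N₁ * N₂)) * ‖ρ‖^2 * y₀' →
        (w₀' : ℝ) = -2 * ρ.re * y₀' + ((N₁ * N₂ : ℝ) / (W₁ * W₂)) * x₀' →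
        x₀ * w₀ - z₀ * y₀ = 1 ∧ x₀' * w₀' - z₀' * y₀' = 1 ∧
        ((N₁ * W₂ : ℂ) / (N₂ * W₁)) * τ = ((x₀ : ℂ) * τ + z₀) / ((y₀ : ℂ) * τ + w₀) ∧
        ((W₁ * W₂ : ℂ) / (N₁ * N₂)) * ρ = ((x₀' : ℂ) * ρ + z₀') / ((y₀' : ℂ) * ρ + w₀')) := by
  have ha1 : (0:ℝ) < (N₁:ℝ) * W₂ :=
    mul_pos (by exact_mod_cast hN₁) (by exact_mod_cast hW₂)
  have hb1 : (0:ℝ) < (N₂:ℝ) * W₁ :=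
    mul_pos (by exact_mod_cast hN₂) (by exact_mod_cast hW₁)
  have ha2 : (0:ℝ) < (W₁:ℝ) * W₂ :=
    mul_pos (by exact_mod_cast hW₁) (by exact_mod_cast hW₂)
  have hb2 : (0:ℝ) < (N₁:ℝ) * N₂ :=
    mul_pos (by exact_mod_cast hN₁) (by exact_mod_cast hN₂)
  constructor
  · constructor
    · rintro ⟨α, β, γ, δ, α', β', γ', δ', h1, h2, h3, h4⟩
      have h3' : ((((N₁:ℝ)*W₂ :ℝ)):ℂ)/((((N₂:ℝ)*W₁ :ℝ)):ℂ) * τ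
          = ((α:ℂ)*τ + β)/((γ:ℂ)*τ + δ) := by
        push_cast
        push_cast at h3
        exact h3
      have h4' : ((((W₁:ℝ)*W₂ :ℝ)):ℂ)/((((N₁:ℝ)*N₂ :ℝ)):ℂ) * ρ
          = ((α':ℂ)*ρ + β')/((γ':ℂ)*ρ + δ') := by
        push_cast
        push_cast at h4
        exact h4
      obtain ⟨hq1, hβ1, hδ1⟩ := forward_one _ _ ha1 hb1 τ hτ α β γ δ h1 h3'
      obtain ⟨hq2, hβ2, hδ2⟩ := forward_one _ _ ha2 hb2 ρ hρ α' β' γ' δ' h2 h4'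
      refine ⟨α, γ, α', γ', ?_, ?_, ⟨β, ?_⟩, ⟨δ, ?_⟩, ⟨β', ?_⟩, ⟨δ', ?_⟩⟩
      · push_cast at hq1 ⊢; linear_combination hq1
      · push_cast at hq2 ⊢; linear_combination hq2
      · push_cast at hβ1 ⊢; linarith
      · push_cast at hδ1 ⊢; linarith
      · push_cast at hβ2 ⊢; linarith
      · push_cast at hδ2 ⊢; linarith
    · rintro ⟨x, y, x', y', hq1, hq2, ⟨z, hz⟩, ⟨w, hw⟩, ⟨z', hz'⟩, ⟨w', hw'⟩⟩
      have hq1' : ((N₂:ℝ)*W₁)^2 * x^2 - 2*(((N₁:ℝ)*W₂)*((N₂:ℝ)*W₁))*τ.re*(x*y)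
          + ((N₁:ℝ)*W₂)^2*‖τ‖^2*y^2 = ((N₁:ℝ)*W₂)*((N₂:ℝ)*W₁) := by
        push_cast at hq1 ⊢; linear_combination hq1
      have hq2' : ((N₁:ℝ)*N₂)^2 * x'^2 - 2*(((W₁:ℝ)*W₂)*((N₁:ℝ)*N₂))*ρ.re*(x'*y')
          + ((W₁:ℝ)*W₂)^2*‖ρ‖^2*y'^2 = ((W₁:ℝ)*W₂)*((N₁:ℝ)*N₂) := by
        push_cast at hq2 ⊢; linear_combination hq2
      have hz1 : (z:ℝ) = -(((N₁:ℝ)*W₂)/((N₂:ℝ)*W₁))*‖τ‖^2*y := by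
        push_cast at hz ⊢; linarith
      have hw1 : (w:ℝ) = -2*τ.re*y + (((N₂:ℝ)*W₁)/((N₁:ℝ)*W₂))*x := by
        push_cast at hw ⊢; linarith
      have hz2 : (z':ℝ) = -(((W₁:ℝ)*W₂)/((N₁:ℝ)*N₂))*‖ρ‖^2*y' := by
        push_cast at hz' ⊢; linarith
      have hw2 : (w':ℝ) = -2*ρ.re*y' + (((N₁:ℝ)*N₂)/((W₁:ℝ)*W₂))*x' := by
        push_cast at hw' ⊢; linarith
      obtain ⟨hd1, hm1⟩ := moreover_one _ _ ha1 hb1 τ hτ x y z w hq1' hz1 hw1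
      obtain ⟨hd2, hm2⟩ := moreover_one _ _ ha2 hb2 ρ hρ x' y' z' w' hq2' hz2 hw2
      refine ⟨x, z, y, w, x', z', y', w', hd1, hd2, ?_, ?_⟩
      · push_cast at hm1 ⊢; exact hm1
      · push_cast at hm2 ⊢; exact hm2
  · intro x y x' y' z w z' w' hq1 hq2 hz hw hz' hw'
    have hq1' : ((N₂:ℝ)*W₁)^2 * x^2 - 2*(((N₁:ℝ)*W₂)*((N₂:ℝ)*W₁))*τ.re*(x*y)
        + ((N₁:ℝ)*W₂)^2*‖τ‖^2*y^2 = ((N₁:ℝ)*W₂)*((N₂:ℝ)*W₁) := by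
      push_cast at hq1 ⊢; linear_combination hq1
    have hq2' : ((N₁:ℝ)*N₂)^2 * x'^2 - 2*(((W₁:ℝ)*W₂)*((N₁:ℝ)*N₂))*ρ.re*(x'*y')
        + ((W₁:ℝ)*W₂)^2*‖ρ‖^2*y'^2 = ((W₁:ℝ)*W₂)*((N₁:ℝ)*N₂) := by
      push_cast at hq2 ⊢; linear_combination hq2
    have hz1 : (z:ℝ) = -(((N₁:ℝ)*W₂)/((N₂:ℝ)*W₁))*‖τ‖^2*y := by
      push_cast at hz ⊢; linarith
    have hw1 : (w:ℝ) = -2*τ.re*y + (((N₂:ℝ)*W₁)/((N₁:ℝ)*W₂))*x := by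
      push_cast at hw ⊢; linarith
    have hz2 : (z':ℝ) = -(((W₁:ℝ)*W₂)/((N₁:ℝ)*N₂))*‖ρ‖^2*y' := by
      push_cast at hz' ⊢; linarith
    have hw2 : (w':ℝ) = -2*ρ.re*y' + (((N₁:ℝ)*N₂)/((W₁:ℝ)*W₂))*x' := by
      push_cast at hw' ⊢; linarith
    obtain ⟨hd1, hm1⟩ := moreover_one _ _ ha1 hb1 τ hτ x y z w hq1' hz1 hw1
    obtain ⟨hd2, hm2⟩ := moreover_one _ _ ha2 hb2 ρ hρ x' y' z' w' hq2' hz2 hw2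
    refine ⟨hd1, hd2, ?_, ?_⟩
    · push_cast at hm1 ⊢; exact hm1
    · push_cast at hm2 ⊢; exact hm2
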